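/- Assume r ≥ 2, fix i ∈ {2, …, n}, and fix an integer k with 1 ≤ k ≤ r − 1. Let u = (1/r)(k, a_2·k mod r, a_3·k mod r, …, a_n·k mod r) ∈ ℚ^n (the i-th minimal point associated to k; note u ∈ N'), let A = ℤ² + ℤ·(1/r)(1, a_i) ⊆ ℚ², and let v = (1/r)(k, a_i·k mod r) ∈ ℚ². Suppose v cannot be written as X + Y with X, Y ∈ A both having nonnegative coordinates and both nonzero (i.e. v belongs to the Hilbert basis of the nonnegative quadrant with respect to A). Then u cannot be written as X + Y with X, Y ∈ N' both having nonnegative coordinates and both nonzero (i.e. u belongs to the Hilbert basis Hlb_{N'}(σ) of the nonnegative orthant σ with respect to N'). -/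

import Mathlib

/-- Let `N' = ℤe_1 + ⋯ + ℤe_n + ℤ·(1/r)(1, a_2, …, a_n) ⊆ ℚⁿ` with
`n ≥ 2` (written `n = m + 2`), `r ≥ 2`, `a_1 = 1`, `0 ≤ a_j ≤ r − 1`, and fix
`i ∈ {2, …, n}` and `1 ≤ k ≤ r − 1`.  Let
`u = (1/r)(k, a_2·k mod r, …, a_n·k mod r) ∈ N'` be the `i`-th minimal point,
`A = ℤ² + ℤ·(1/r)(1, a_i) ⊆ ℚ²` and `v = (1/r)(k, a_i·k mod r)`.
If `v` is not the sum of two nonzero elements of `A` with nonnegative coordinates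
(i.e. `v` is in the Hilbert basis of the nonnegative quadrant w.r.t. `A`), then `u` is not
the sum of two nonzero elements of `N'` with nonnegative coordinates (i.e. `u` is in the
Hilbert basis `Hlb_{N'}(σ)` of the nonnegative orthant `σ` w.r.t. `N'`). -/

lemma span_struct {n : ℕ} (r : ℕ) (a : Fin n → ℕ) (x : Fin n → ℚ)
    (hx : x ∈ Submodule.span ℤ (insert (fun j => (a j : ℚ) / r)
      (Set.range fun j : Fin n => (Pi.single j 1 : Fin n → ℚ)))) :
    ∃ (c : ℤ) (z : Fin n → ℤ), ∀ j, x j = c * ((a j : ℚ) / r) + z j := by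
  induction hx using Submodule.span_induction with
  | mem y hy =>
    rcases hy with h | ⟨j, rfl⟩
    · exact ⟨1, 0, by simp [h]⟩
    · refine ⟨0, fun j' => if j' = j then 1 else 0, fun j' => ?_⟩
      simp only [Pi.single_apply]
      split <;> simp
  | zero => exact ⟨0, 0, by simp⟩
  | add y z _ _ hy hz =>
    obtain ⟨c1, z1, h1⟩ := hy
    obtain ⟨c2, z2, h2⟩ := hz
    exact ⟨c1 + c2, z1 + z2, fun j => by simp only [Pi.add_apply, h1 j, h2 j]; push_cast; ring⟩
  | smul t y _ hy =>
    obtain ⟨c, z, h⟩ := hy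
    exact ⟨t * c, t • z, fun j => by
      simp only [Pi.smul_apply, zsmul_eq_mul, h j]; push_cast; ring⟩

theorem minimal_point_mem_hilbert_basis
    {m : ℕ} (r : ℕ) (hr : 2 ≤ r) (a : Fin (m + 2) → ℕ)
    (ha0 : a 0 = 1) (ha : ∀ j, a j < r)
    (i : Fin (m + 2)) (hi : i ≠ 0)
    (k : ℕ) (hk1 : 1 ≤ k) (hk2 : k ≤ r - 1)
    (hv : ¬ ∃ X Y : Fin 2 → ℚ,
      X ∈ Submodule.span ℤ (insert ![(1 : ℚ) / r, (a i : ℚ) / r]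
            (Set.range fun t : Fin 2 => (Pi.single t 1 : Fin 2 → ℚ))) ∧
      Y ∈ Submodule.span ℤ (insert ![(1 : ℚ) / r, (a i : ℚ) / r]
            (Set.range fun t : Fin 2 => (Pi.single t 1 : Fin 2 → ℚ))) ∧
      (∀ t, 0 ≤ X t) ∧ (∀ t, 0 ≤ Y t) ∧ X ≠ 0 ∧ Y ≠ 0 ∧
      ![(k : ℚ) / r, ((a i * k % r : ℕ) : ℚ) / r] = X + Y) :
    ¬ ∃ X Y : Fin (m + 2) → ℚ,
      X ∈ Submodule.span ℤ (insert (fun j => (a j : ℚ) / r)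
            (Set.range fun j : Fin (m + 2) => (Pi.single j 1 : Fin (m + 2) → ℚ))) ∧
      Y ∈ Submodule.span ℤ (insert (fun j => (a j : ℚ) / r)
            (Set.range fun j : Fin (m + 2) => (Pi.single j 1 : Fin (m + 2) → ℚ))) ∧
      (∀ j, 0 ≤ X j) ∧ (∀ j, 0 ≤ Y j) ∧ X ≠ 0 ∧ Y ≠ 0 ∧
      (fun j : Fin (m + 2) =>
          if j = 0 then (k : ℚ) / r else ((a j * k % r : ℕ) : ℚ) / r) = X + Y := by
  rintro ⟨X, Y, hX, hY, hX0, hY0, hXne, hYne, hsum⟩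
  apply hv
  have hr0 : (0 : ℚ) < r := by positivity
  set u : Fin (m + 2) → ℚ :=
    fun j => if j = 0 then (k : ℚ) / r else ((a j * k % r : ℕ) : ℚ) / r with hu
  have hult : ∀ j, u j < 1 := by
    intro j
    simp only [hu]
    split
    · rw [div_lt_one hr0]
      exact_mod_cast lt_of_le_of_lt hk2 (Nat.sub_lt (by omega) one_pos)
    · rw [div_lt_one hr0]
      exact_mod_cast Nat.mod_lt _ (by omega)
  have hXle : ∀ j, X j ≤ u j := fun j => by
    have := congrFun hsum j
    simp only [Pi.add_apply] at this
    nlinarith [hY0 j, this]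
  have hYle : ∀ j, Y j ≤ u j := fun j => by
    have := congrFun hsum j
    simp only [Pi.add_apply] at this
    nlinarith [hX0 j, this]
  -- key lemma
  have key : ∀ x : Fin (m + 2) → ℚ,
      x ∈ Submodule.span ℤ (insert (fun j => (a j : ℚ) / r)
        (Set.range fun j : Fin (m + 2) => (Pi.single j 1 : Fin (m + 2) → ℚ))) →
      (∀ j, 0 ≤ x j) → (∀ j, x j ≤ u j) → x ≠ 0 → x 0 ≠ 0 := by
    intro x hx hx0 hxle hxne h0
    obtain ⟨c, z, hcz⟩ := span_struct r a x hx
    have h00 := hcz 0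
    rw [h0, ha0] at h00
    have hcr : (c : ℚ) = (-z 0) * r := by
      push_cast
      field_simp at h00
      push_cast at h00
      linarith
    have hcr' : c = (-z 0) * r := by exact_mod_cast hcr
    apply hxne
    funext j
    have hxj : x j = ((-z 0 * (a j : ℤ) + z j : ℤ) : ℚ) := by
      rw [hcz j, hcr]
      push_cast
      field_simp
    have h1 : (0 : ℤ) ≤ -z 0 * (a j : ℤ) + z j := by
      have := hx0 j; rw [hxj] at this; exact_mod_cast this
    have h2 : (-z 0 * (a j : ℤ) + z j : ℤ) < 1 := by
      have := lt_of_le_of_lt (hxle j) (hult j); rw [hxj] at this; exact_mod_cast this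
    have h3 : (-z 0 * (a j : ℤ) + z j : ℤ) = 0 := by omega
    have : x j = 0 := by rw [hxj, h3]; norm_num
    simpa using this
  have hX0ne : X 0 ≠ 0 := key X hX hX0 hXle hXne
  have hY0ne : Y 0 ≠ 0 := key Y hY hY0 hYle hYne
  -- projection membership
  have proj : ∀ x : Fin (m + 2) → ℚ,
      x ∈ Submodule.span ℤ (insert (fun j => (a j : ℚ) / r)
        (Set.range fun j : Fin (m + 2) => (Pi.single j 1 : Fin (m + 2) → ℚ))) →
      ![x 0, x i] ∈ Submodule.span ℤ (insert ![(1 : ℚ) / r, (a i : ℚ) / r]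
        (Set.range fun t : Fin 2 => (Pi.single t 1 : Fin 2 → ℚ))) := by
    intro x hx
    obtain ⟨c, z, hcz⟩ := span_struct r a x hx
    have heq : ![x 0, x i] = c • ![(1 : ℚ) / r, (a i : ℚ) / r]
        + (z 0) • (Pi.single 0 1 : Fin 2 → ℚ) + (z i) • (Pi.single 1 1 : Fin 2 → ℚ) := by
      funext t
      fin_cases t
      · simp [hcz 0, ha0, Pi.single_apply, Matrix.vecHead, Matrix.vecTail, Pi.mul_apply]
      · simp [hcz i, Pi.single_apply, Matrix.vecHead, Matrix.vecTail, Pi.mul_apply]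
    rw [heq]
    refine Submodule.add_mem _ (Submodule.add_mem _ ?_ ?_) ?_
    · exact Submodule.smul_mem _ _ (Submodule.subset_span (Set.mem_insert _ _))
    · exact Submodule.smul_mem _ _ (Submodule.subset_span (Set.mem_insert_of_mem _ ⟨0, rfl⟩))
    · exact Submodule.smul_mem _ _ (Submodule.subset_span (Set.mem_insert_of_mem _ ⟨1, rfl⟩))
  refine ⟨![X 0, X i], ![Y 0, Y i], proj X hX, proj Y hY, ?_, ?_, ?_, ?_, ?_⟩
  · intro t; fin_cases t <;> simp [hX0 0, hX0 i]
  · intro t; fin_cases t <;> simp [hY0 0, hY0 i]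
  · intro h; exact hX0ne (by simpa using congrFun h 0)
  · intro h; exact hY0ne (by simpa using congrFun h 0)
  · funext t
    fin_cases t
    · have := congrFun hsum 0
      simp only [hu, Pi.add_apply, if_pos rfl] at this
      simpa using this
    · have := congrFun hsum i
      simp only [hu, Pi.add_apply, if_neg hi] at this
      simpa using this
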